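/- Let A be an m×n real matrix partitioned as A = [[A₁₁, A₁₂],[A₂₁, A₂₂]] with A₁₁ a nonsingular k×k block, k < min(m,n). Then σ_{k+1}(A) ≤ √((m−k)(n−k)) · ‖A/A₁₁‖_C. In particular, if ‖A/A₁₁‖_C ≤ ρβ for some ρ ≥ 1 and β > 0, then σ_{k+1}(A) ≤ ρβ√((m−k)(n−k)). -/

import Mathlib

open Matrix

/-- The maximum absolute entry norm `‖·‖_C` of a matrix. -/
noncomputable def cnorm {m n : Type*} [Fintype m] [Fintype n]
    (M : Matrix m n ℝ) : ℝ := ⨆ i, ⨆ j, |M i j|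

/-- The `k`-th largest value (1-indexed) of a finite family of reals. -/
noncomputable def kthLargest {ι : Type*} [Fintype ι] (f : ι → ℝ) (k : ℕ) : ℝ :=
  ((Finset.univ.val.map f).sort (· ≤ ·)).getD (Fintype.card ι - k) 0

/-- The `k`-th largest singular value (1-indexed) of a real matrix,
i.e. the square root of the `k`-th largest eigenvalue of `Aᴴ * A`. -/
noncomputable def singularValue {m n : Type*} [Fintype m] [Fintype n] [DecidableEq n]
    (A : Matrix m n ℝ) (k : ℕ) : ℝ :=
  Real.sqrt (kthLargest (Matrix.isHermitian_conjTranspose_mul_self A).eigenvalues k)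

lemma sorted_getD_le {l : List ℝ} (hl : l.Pairwise (· ≤ ·)) {j : ℕ} {c : ℝ}
    (h : j < l.countP (fun x => decide (x ≤ c))) : l.getD j 0 ≤ c := by
  by_contra hgt
  push_neg at hgt
  have hjlen : j < l.length := lt_of_lt_of_le h List.countP_le_length
  rw [List.getD_eq_getElem _ _ hjlen] at hgt
  have hcount : l.countP (fun x => decide (x ≤ c)) =
      (l.take j).countP (fun x => decide (x ≤ c))
        + (l.drop j).countP (fun x => decide (x ≤ c)) := by
    conv_lhs => rw [← List.take_append_drop j l]
    exact List.countP_append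
  have hdrop : (l.drop j).countP (fun x => decide (x ≤ c)) = 0 := by
    rw [List.countP_eq_zero]
    intro x hx
    obtain ⟨i, hi, hx'⟩ := List.mem_iff_getElem.mp hx
    have hji : j + i < l.length := by
      have : (l.drop j).length = l.length - j := List.length_drop
      omega
    have hgl : (l.drop j)[i] = l[j + i] := List.getElem_drop
    have hle : l[j] ≤ l[j + i] := by
      have := hl.rel_get_of_le (a := ⟨j, hjlen⟩) (b := ⟨j + i, hji⟩)
        (by simp [Fin.le_def])
      simpa [List.get_eq_getElem] using this
    have : c < x := by rw [← hx', hgl]; exact lt_of_lt_of_le hgt hle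
    simp [not_le.mpr this]
  have hle := hcount ▸ h
  rw [hdrop, Nat.add_zero] at hle
  have : (l.take j).countP (fun x => decide (x ≤ c)) ≤ (l.take j).length := List.countP_le_length
  rw [List.length_take] at this
  omega

lemma kthLargest_le {ι : Type*} [Fintype ι] (f : ι → ℝ) (c : ℝ) (k : ℕ)
    (hk : k < Fintype.card ι)
    (hcount : (Finset.univ.filter (fun i => c < f i)).card ≤ k) :
    kthLargest f (k + 1) ≤ c := by
  classical
  set l := ((Finset.univ.val.map f).sort (· ≤ ·)) with hl
  have hsorted : l.Pairwise (· ≤ ·) := Multiset.pairwise_sort ..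
  have hcnt : l.countP (fun x => decide (x ≤ c)) =
      (Finset.univ.filter (fun i => f i ≤ c)).card := by
    have h1 : (l : Multiset ℝ) = Finset.univ.val.map f := Multiset.sort_eq _ _
    have h2 : l.countP (fun x => decide (x ≤ c)) =
        Multiset.countP (fun x => x ≤ c) (l : Multiset ℝ) := by
      simp [Multiset.coe_countP]
    rw [h2, h1, Multiset.countP_map]
    simp [Finset.card_filter, Finset.filter]
  have hsplit : (Finset.univ.filter (fun i => c < f i)).card
      + (Finset.univ.filter (fun i => f i ≤ c)).card = Fintype.card ι := by
    have := Finset.card_filter_add_card_filter_not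
      (s := (Finset.univ : Finset ι)) (p := fun i => c < f i)
    simpa [not_lt, Finset.card_univ] using this
  have hidx : Fintype.card ι - (k + 1) < l.countP (fun x => decide (x ≤ c)) := by
    rw [hcnt]; omega
  exact sorted_getD_le hsorted hidx

lemma real_conjTranspose {m n : Type*} (M : Matrix m n ℝ) : Mᴴ = Mᵀ := by
  ext i j; simp [Matrix.conjTranspose_apply]

lemma eig_count_le {ι : Type*} [Fintype ι] [DecidableEq ι]
    {H : Matrix ι ι ℝ} (hH : H.IsHermitian) (c : ℝ) {d kk : ℕ}
    (T : (Fin d → ℝ) →ₗ[ℝ] (ι → ℝ)) (hT : Function.Injective T)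
    (hcard : Fintype.card ι < kk + 1 + d)
    (hq : ∀ y, T y ⬝ᵥ H *ᵥ (T y) ≤ c * (T y ⬝ᵥ T y)) :
    (Finset.univ.filter (fun i => c < hH.eigenvalues i)).card ≤ kk := by
  classical
  by_contra hcount
  push_neg at hcount
  set U : Matrix ι ι ℝ := (hH.eigenvectorUnitary : Matrix ι ι ℝ) with hU
  have hUstar : star U * U = 1 := Unitary.coe_star_mul_self hH.eigenvectorUnitary
  have hUstar' : U * star U = 1 := Unitary.coe_mul_star_self hH.eigenvectorUnitary
  set ψ : (Fin d → ℝ) →ₗ[ℝ] ({i : ι // ¬ c < hH.eigenvalues i} → ℝ) :=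
    (LinearMap.funLeft ℝ ℝ Subtype.val) ∘ₗ (Matrix.mulVecLin (star U)) ∘ₗ T with hψ
  have hcard' : Fintype.card {i : ι // ¬ c < hH.eigenvalues i} < d := by
    rw [Fintype.card_subtype]
    have := Finset.card_filter_add_card_filter_not
      (s := (Finset.univ : Finset ι)) (p := fun i => c < hH.eigenvalues i)
    rw [Finset.card_univ] at this
    omega
  have hninj : ¬ Function.Injective ψ := by
    intro hinj
    have := LinearMap.finrank_le_finrank_of_injective hinj
    rw [Module.finrank_pi, Module.finrank_pi, Fintype.card_fin] at this
    omega
  obtain ⟨a, b, hab, hne⟩ := Function.not_injective_iff.mp hninj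
  set y := a - b with hy
  have hy0 : y ≠ 0 := sub_ne_zero.mpr hne
  have hψy : ψ y = 0 := by rw [hy, map_sub, hab, sub_self]
  set x := T y with hx
  have hx0 : x ≠ 0 := fun h => hy0 (hT (by rw [map_zero]; exact h))
  set w := (star U) *ᵥ x with hw
  have hwzero : ∀ i : ι, ¬ c < hH.eigenvalues i → w i = 0 := by
    intro i hi
    have := congrFun hψy ⟨i, hi⟩
    simpa [hψ, LinearMap.funLeft, hw, hx] using this
  have hxw : U *ᵥ w = x := by
    rw [hw, Matrix.mulVec_mulVec, hUstar', Matrix.one_mulVec]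
  have hw0 : w ≠ 0 := fun h => hx0 (by rw [← hxw, h, Matrix.mulVec_zero])
  have hvecMul : ∀ v : ι → ℝ, v ᵥ* U = (star U) *ᵥ v := by
    intro v
    rw [← Matrix.mulVec_transpose, Matrix.star_eq_conjTranspose, real_conjTranspose]
  have hquad : x ⬝ᵥ H *ᵥ x = ∑ i, hH.eigenvalues i * (w i) ^ 2 := by
    conv_lhs => rw [hH.spectral_theorem, Unitary.conjStarAlgAut_apply]
    rw [← Matrix.mulVec_mulVec, ← Matrix.mulVec_mulVec, Matrix.dotProduct_mulVec, hvecMul]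
    rw [← hw]
    simp only [dotProduct, Matrix.mulVec_diagonal]
    apply Finset.sum_congr rfl
    intro i _
    simp [RCLike.ofReal]
    ring
  have hnorm : x ⬝ᵥ x = ∑ i, (w i) ^ 2 := by
    conv_lhs => rw [← hxw]
    rw [Matrix.dotProduct_mulVec, hvecMul, Matrix.mulVec_mulVec, hUstar, Matrix.one_mulVec]
    simp [dotProduct, sq]
  obtain ⟨i0, hi0⟩ : ∃ i, w i ≠ 0 := by
    by_contra h; push_neg at h; exact hw0 (funext h)
  have hi0' : c < hH.eigenvalues i0 := by
    by_contra h; exact hi0 (hwzero i0 h)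
  have hlt : c * (x ⬝ᵥ x) < x ⬝ᵥ H *ᵥ x := by
    rw [hquad, hnorm, Finset.mul_sum]
    apply Finset.sum_lt_sum
    · intro i _
      by_cases hwi : w i = 0
      · simp [hwi]
      · have hci : c < hH.eigenvalues i := by
          by_contra h; exact hwi (hwzero i h)
        exact mul_le_mul_of_nonneg_right hci.le (sq_nonneg _)
    · exact ⟨i0, Finset.mem_univ _, mul_lt_mul_of_pos_right hi0' (sq_pos_of_ne_zero hi0)⟩
  exact absurd (hq y) (not_le.mpr hlt)

lemma abs_le_cnorm {m n : Type*} [Fintype m] [Fintype n]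
    (M : Matrix m n ℝ) (i : m) (j : n) : |M i j| ≤ cnorm M := by
  have h1 : |M i j| ≤ ⨆ j, |M i j| :=
    le_ciSup (Set.Finite.bddAbove (Set.finite_range (fun j => |M i j|))) j
  exact h1.trans
    (le_ciSup (Set.Finite.bddAbove (Set.finite_range (fun i => ⨆ j, |M i j|))) i)

lemma cnorm_nonneg {m n : Type*} [Fintype m] [Fintype n] [Nonempty m] [Nonempty n]
    (M : Matrix m n ℝ) : 0 ≤ cnorm M :=
  le_trans (abs_nonneg _) (abs_le_cnorm M (Classical.arbitrary m) (Classical.arbitrary n))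

/-- Let `A = [[A₁₁, A₁₂], [A₂₁, A₂₂]]` be an `m × n` real matrix with `A₁₁` a nonsingular
`k × k` block, `k < min(m,n)`.  Then `σ_{k+1}(A) ≤ √((m−k)(n−k)) * ‖A/A₁₁‖_C`.
In particular, if `‖A/A₁₁‖_C ≤ ρ β` for some `ρ ≥ 1`, `β > 0`, then
`σ_{k+1}(A) ≤ ρ β √((m−k)(n−k))`. -/
theorem sigma_succ_le_schur_cnorm {k m₂ n₂ : ℕ} (hm : 0 < m₂) (hn : 0 < n₂)
    (A₁₁ : Matrix (Fin k) (Fin k) ℝ) (A₁₂ : Matrix (Fin k) (Fin n₂) ℝ)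
    (A₂₁ : Matrix (Fin m₂) (Fin k) ℝ) (A₂₂ : Matrix (Fin m₂) (Fin n₂) ℝ)
    (hA : IsUnit A₁₁.det) :
    singularValue (Matrix.fromBlocks A₁₁ A₁₂ A₂₁ A₂₂) (k + 1) ≤
      Real.sqrt ((m₂ : ℝ) * (n₂ : ℝ)) * cnorm (A₂₂ - A₂₁ * A₁₁⁻¹ * A₁₂) ∧
    ∀ ρ β : ℝ, 1 ≤ ρ → 0 < β → cnorm (A₂₂ - A₂₁ * A₁₁⁻¹ * A₁₂) ≤ ρ * β →
      singularValue (Matrix.fromBlocks A₁₁ A₁₂ A₂₁ A₂₂) (k + 1) ≤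
        ρ * β * Real.sqrt ((m₂ : ℝ) * (n₂ : ℝ)) := by
  classical
  haveI : Nonempty (Fin m₂) := ⟨⟨0, hm⟩⟩
  haveI : Nonempty (Fin n₂) := ⟨⟨0, hn⟩⟩
  set S : Matrix (Fin m₂) (Fin n₂) ℝ := A₂₂ - A₂₁ * A₁₁⁻¹ * A₁₂ with hS
  set M : Matrix (Fin k ⊕ Fin m₂) (Fin k ⊕ Fin n₂) ℝ :=
    Matrix.fromBlocks A₁₁ A₁₂ A₂₁ A₂₂ with hM
  have hcS : 0 ≤ cnorm S := cnorm_nonneg S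
  set c : ℝ := (m₂ : ℝ) * (n₂ : ℝ) * (cnorm S) ^ 2 with hc
  have hc0 : 0 ≤ c := by positivity
  set T : (Fin n₂ → ℝ) →ₗ[ℝ] (Fin k ⊕ Fin n₂ → ℝ) :=
    { toFun := fun y => Sum.elim (-((A₁₁⁻¹ * A₁₂) *ᵥ y)) y
      map_add' := by
        intro y z; funext i
        cases i with
        | inl i => simp [Matrix.mulVec_add]; ring
        | inr i => simp
      map_smul' := by
        intro r y; funext i
        cases i with
        | inl i => simp [Matrix.mulVec_smul]
        | inr i => simp } with hT
  have hTapp : ∀ y, T y = Sum.elim (-((A₁₁⁻¹ * A₁₂) *ᵥ y)) y := fun y => rfl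
  have hTinj : Function.Injective T := by
    intro y z h
    funext j
    have := congrFun h (Sum.inr j)
    simpa [hTapp] using this
  have hMx : ∀ y, M *ᵥ (T y) = Sum.elim (0 : Fin k → ℝ) (S *ᵥ y) := by
    intro y
    rw [hTapp, hM, Matrix.fromBlocks_mulVec, Sum.elim_comp_inl, Sum.elim_comp_inr]
    have htop : A₁₁ *ᵥ -((A₁₁⁻¹ * A₁₂) *ᵥ y) + A₁₂ *ᵥ y = (0 : Fin k → ℝ) := by
      rw [Matrix.mulVec_neg, Matrix.mulVec_mulVec, ← Matrix.mul_assoc,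
        Matrix.mul_nonsing_inv _ hA, Matrix.one_mul]
      simp
    have hbot : A₂₁ *ᵥ -((A₁₁⁻¹ * A₁₂) *ᵥ y) + A₂₂ *ᵥ y = S *ᵥ y := by
      rw [Matrix.mulVec_neg, Matrix.mulVec_mulVec, hS, Matrix.sub_mulVec,
        ← Matrix.mul_assoc]
      exact neg_add_eq_sub _ _
    rw [htop, hbot]
  have hq : ∀ y, T y ⬝ᵥ (Mᴴ * M) *ᵥ (T y) ≤ c * (T y ⬝ᵥ T y) := by
    intro y
    have h1 : T y ⬝ᵥ (Mᴴ * M) *ᵥ (T y) = (M *ᵥ T y) ⬝ᵥ (M *ᵥ T y) := by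
      rw [← Matrix.mulVec_mulVec, Matrix.dotProduct_mulVec, real_conjTranspose,
        Matrix.vecMul_transpose]
    have h2 : (M *ᵥ T y) ⬝ᵥ (M *ᵥ T y) = (S *ᵥ y) ⬝ᵥ (S *ᵥ y) := by
      rw [hMx y]
      simp [dotProduct, Fintype.sum_sum_type]
    have h5 : ∀ i : Fin m₂, ∑ j, (S i j) ^ 2 ≤ (n₂ : ℝ) * (cnorm S) ^ 2 := by
      intro i
      calc ∑ j, (S i j) ^ 2 ≤ ∑ _j : Fin n₂, (cnorm S) ^ 2 :=
            Finset.sum_le_sum (fun j _ => by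
              rw [← sq_abs]
              exact pow_le_pow_left₀ (abs_nonneg _) (abs_le_cnorm S i j) 2)
        _ = (n₂ : ℝ) * (cnorm S) ^ 2 := by
            simp [Finset.sum_const, nsmul_eq_mul]
    have hynn : 0 ≤ ∑ j, y j ^ 2 := Finset.sum_nonneg (fun j _ => sq_nonneg _)
    have h3 : (S *ᵥ y) ⬝ᵥ (S *ᵥ y) ≤ c * (y ⬝ᵥ y) := by
      have h6 : y ⬝ᵥ y = ∑ j, y j ^ 2 := by simp [dotProduct, sq]
      have hrow : ∀ i : Fin m₂,
          (S *ᵥ y) i * (S *ᵥ y) i ≤ ((n₂ : ℝ) * (cnorm S) ^ 2) * (∑ j, y j ^ 2) := by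
        intro i
        have h4 : (S *ᵥ y) i * (S *ᵥ y) i = (∑ j, S i j * y j) ^ 2 := by
          simp [Matrix.mulVec, dotProduct, sq]
        rw [h4]
        calc (∑ j, S i j * y j) ^ 2 ≤ (∑ j, (S i j) ^ 2) * (∑ j, y j ^ 2) :=
              Finset.sum_mul_sq_le_sq_mul_sq Finset.univ _ _
          _ ≤ ((n₂ : ℝ) * (cnorm S) ^ 2) * (∑ j, y j ^ 2) :=
              mul_le_mul_of_nonneg_right (h5 i) hynn
      calc (S *ᵥ y) ⬝ᵥ (S *ᵥ y) = ∑ i, (S *ᵥ y) i * (S *ᵥ y) i := rfl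
        _ ≤ ∑ _i : Fin m₂, ((n₂ : ℝ) * (cnorm S) ^ 2) * (∑ j, y j ^ 2) :=
            Finset.sum_le_sum (fun i _ => hrow i)
        _ = c * (y ⬝ᵥ y) := by
            rw [h6, hc]
            simp [Finset.sum_const, nsmul_eq_mul]
            ring
    have h7 : y ⬝ᵥ y ≤ T y ⬝ᵥ T y := by
      rw [hTapp]
      have : Sum.elim (-((A₁₁⁻¹ * A₁₂) *ᵥ y)) y ⬝ᵥ Sum.elim (-((A₁₁⁻¹ * A₁₂) *ᵥ y)) y
          = (∑ i : Fin k, (-((A₁₁⁻¹ * A₁₂) *ᵥ y)) i * (-((A₁₁⁻¹ * A₁₂) *ᵥ y)) i)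
            + y ⬝ᵥ y := by
        simp [dotProduct, Fintype.sum_sum_type]
      rw [this]
      have hnn : 0 ≤ ∑ i : Fin k, (-((A₁₁⁻¹ * A₁₂) *ᵥ y)) i * (-((A₁₁⁻¹ * A₁₂) *ᵥ y)) i :=
        Finset.sum_nonneg (fun i _ => mul_self_nonneg _)
      linarith
    calc T y ⬝ᵥ (Mᴴ * M) *ᵥ (T y) = (S *ᵥ y) ⬝ᵥ (S *ᵥ y) := h1.trans h2
      _ ≤ c * (y ⬝ᵥ y) := h3
      _ ≤ c * (T y ⬝ᵥ T y) := mul_le_mul_of_nonneg_left h7 hc0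
  have hcardineq : Fintype.card (Fin k ⊕ Fin n₂) < k + 1 + n₂ := by
    simp [Fintype.card_sum]
  have hcnt := eig_count_le (Matrix.isHermitian_conjTranspose_mul_self M) c T hTinj hcardineq hq
  have hk' : k < Fintype.card (Fin k ⊕ Fin n₂) := by
    simp [Fintype.card_sum]; omega
  have hkth : kthLargest (Matrix.isHermitian_conjTranspose_mul_self M).eigenvalues (k + 1) ≤ c :=
    kthLargest_le _ c k hk' hcnt
  have hmain : singularValue M (k + 1) ≤ Real.sqrt ((m₂ : ℝ) * (n₂ : ℝ)) * cnorm S := by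
    show Real.sqrt (kthLargest (Matrix.isHermitian_conjTranspose_mul_self M).eigenvalues (k + 1))
      ≤ _
    calc Real.sqrt (kthLargest (Matrix.isHermitian_conjTranspose_mul_self M).eigenvalues (k + 1))
        ≤ Real.sqrt c := Real.sqrt_le_sqrt hkth
      _ = Real.sqrt ((m₂ : ℝ) * (n₂ : ℝ)) * cnorm S := by
          rw [hc, Real.sqrt_mul (by positivity : (0:ℝ) ≤ (m₂ : ℝ) * (n₂ : ℝ)),
            Real.sqrt_sq hcS]
  refine ⟨hmain, fun ρ β hρ hβ hle => ?_⟩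
  calc singularValue M (k + 1) ≤ Real.sqrt ((m₂ : ℝ) * (n₂ : ℝ)) * cnorm S := hmain
    _ ≤ Real.sqrt ((m₂ : ℝ) * (n₂ : ℝ)) * (ρ * β) :=
        mul_le_mul_of_nonneg_left hle (Real.sqrt_nonneg _)
    _ = ρ * β * Real.sqrt ((m₂ : ℝ) * (n₂ : ℝ)) := mul_comm _ _
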